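/- (Linear independence of Gaussian mean-derivatives.) Let k ≥ 1 and let (b_1, ν_1),…,(b_k, ν_k) ∈ ℝ × ℝ_{>0} be pairwise distinct pairs. Let N_1,…,N_k be natural numbers and let ξ_{j,ω} ∈ ℝ for j ∈ [k], 0 ≤ ω ≤ N_j. If Σ_{j=1}^{k} Σ_{ω=0}^{N_j} ξ_{j,ω} · (∂^ω φ/∂b^ω)(y; b_j, ν_j) = 0 for Lebesgue-almost every y ∈ ℝ, then ξ_{j,ω} = 0 for all j and ω. Here (∂^ω φ/∂b^ω)(y; b_j, ν_j) denotes the ω-th derivative of the map b ↦ φ(y; b, ν_j) evaluated at b = b_j. -/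

import Mathlib

/-- The univariate Gaussian density with mean `b` and variance `ν`:
`φ(y; b, ν) = (2πν)^(-1/2) exp(−(y−b)²/(2ν))`. -/
noncomputable def gauss1 (y b ν : ℝ) : ℝ :=
  (2 * Real.pi * ν) ^ (-(1 : ℝ) / 2) * Real.exp (-((y - b) ^ 2) / (2 * ν))

open Polynomial

/-- Hermite-type polynomials for variance ν. -/
noncomputable def gq (ν : ℝ) : ℕ → Polynomial ℝ
  | 0 => 1
  | n + 1 => C ν⁻¹ * X * gq ν n - derivative (gq ν n)

lemma gq_natDegree_le (ν : ℝ) (n : ℕ) : (gq ν n).natDegree ≤ n := by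
  induction n with
  | zero => simp [gq]
  | succ n ih =>
    rw [gq]
    refine (natDegree_sub_le _ _).trans (max_le ?_ ?_)
    · refine (natDegree_mul_le).trans ?_
      have : (C ν⁻¹ * X).natDegree ≤ 1 := (natDegree_mul_le).trans (by simp)
      omega
    · have := natDegree_derivative_le (gq ν n)
      omega

lemma gq_coeff_self (ν : ℝ) (n : ℕ) : (gq ν n).coeff n = ν⁻¹ ^ n := by
  induction n with
  | zero => simp [gq]
  | succ n ih =>
    rw [gq]
    have h1 : (derivative (gq ν n)).coeff (n + 1) = 0 := by
      apply coeff_eq_zero_of_natDegree_lt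
      have := natDegree_derivative_le (gq ν n)
      have := gq_natDegree_le ν n
      omega
    have h2 : (C ν⁻¹ * X * gq ν n).coeff (n + 1) = ν⁻¹ * (gq ν n).coeff n := by
      rw [mul_assoc, mul_comm X, ← mul_assoc, coeff_mul_X, coeff_C_mul]
    rw [coeff_sub, h1, h2, ih, pow_succ]
    ring

lemma gauss1_hasDerivAt (y ν b : ℝ) (hν : ν ≠ 0) :
    HasDerivAt (fun b' => gauss1 y b' ν) ((y - b) / ν * gauss1 y b ν) b := by
  have h1 : HasDerivAt (fun b' : ℝ => -((y - b') ^ 2) / (2 * ν)) ((y - b) / ν) b := by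
    have h0 : HasDerivAt (fun b' : ℝ => y - b') (-1) b := by
      simpa using (hasDerivAt_id b).const_sub y
    have := ((h0.pow 2).neg.div_const (2 * ν))
    refine this.congr_deriv ?_
    field_simp
    ring
  have := (h1.exp.const_mul ((2 * Real.pi * ν) ^ (-(1 : ℝ) / 2)))
  refine this.congr_deriv ?_
  unfold gauss1
  ring

lemma iteratedDeriv_gauss1 (y ν : ℝ) (hν : ν ≠ 0) (n : ℕ) (b : ℝ) :
    iteratedDeriv n (fun b' => gauss1 y b' ν) b = (gq ν n).eval (y - b) * gauss1 y b ν := by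
  induction n generalizing b with
  | zero => simp [gq]
  | succ n ih =>
    rw [iteratedDeriv_succ]
    have hcongr : deriv (iteratedDeriv n (fun b' => gauss1 y b' ν)) b
        = deriv (fun b' => (gq ν n).eval (y - b') * gauss1 y b' ν) b := by
      apply Filter.EventuallyEq.deriv_eq
      exact Filter.Eventually.of_forall fun b' => ih b'
    rw [hcongr]
    have hp : HasDerivAt (fun b' : ℝ => (gq ν n).eval (y - b'))
        (-(derivative (gq ν n)).eval (y - b)) b := by
      have h0 : HasDerivAt (fun b' : ℝ => y - b') (-1) b := by
        simpa using (hasDerivAt_id b).const_sub y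
      exact (((gq ν n).hasDerivAt (y - b)).comp b h0).congr_deriv (by simp)
    have := hp.mul (gauss1_hasDerivAt y ν b hν)
    rw [HasDerivAt.deriv (f := fun b' => (gq ν n).eval (y - b') * gauss1 y b' ν) this]
    rw [gq]
    simp only [eval_sub, eval_mul, eval_C, eval_X]
    ring
open Polynomial Filter Real

/-- polynomial times decaying exponential tends to 0. -/
lemma poly_mul_exp_tendsto (p : Polynomial ℝ) (d : ℝ) (hd : d < 0) :
    Tendsto (fun y => p.eval y * Real.exp (d * y)) atTop (nhds 0) := by
  have hd' : (0:ℝ) < -d := by linarith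
  have h1 := (p.comp (C (-d)⁻¹ * X)).tendsto_div_exp_atTop
  have h2 : Tendsto (fun y : ℝ => -d * y) atTop atTop :=
    Tendsto.const_mul_atTop hd' tendsto_id
  have h3 := h1.comp h2
  convert h3 using 2 with y
  simp only [Function.comp_apply, eval_comp, eval_mul, eval_C, eval_X]
  rw [inv_mul_cancel_left₀ (by linarith : -d ≠ 0)]
  rw [div_eq_mul_inv, ← Real.exp_neg]
  ring_nf

lemma poly_mul_exp_quad_tendsto (p : Polynomial ℝ) (c d : ℝ) (hc : 0 < c) :
    Tendsto (fun y => p.eval y * Real.exp (-c * y ^ 2 + d * y)) atTop (nhds 0) := by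
  have hb : Tendsto (fun y => |p.eval y * Real.exp (-(1:ℝ) * y)|) atTop (nhds 0) := by
    simpa using (poly_mul_exp_tendsto p (-1) (by norm_num)).abs
  apply squeeze_zero_norm' _ hb
  filter_upwards [eventually_ge_atTop ((d + 1) / c), eventually_ge_atTop 0] with y hy hy0
  have hexp : -c * y ^ 2 + d * y ≤ -1 * y := by
    have h1 : c * y ≥ d + 1 := by
      have := (div_le_iff₀ hc).mp hy
      linarith [mul_comm y c]
    nlinarith
  calc ‖p.eval y * Real.exp (-c * y ^ 2 + d * y)‖
      = |p.eval y| * Real.exp (-c * y ^ 2 + d * y) := by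
        rw [Real.norm_eq_abs, abs_mul, abs_of_pos (Real.exp_pos _)]
    _ ≤ |p.eval y| * Real.exp (-1 * y) := by
        exact mul_le_mul_of_nonneg_left (Real.exp_le_exp.mpr hexp) (abs_nonneg _)
    _ = |p.eval y * Real.exp (-1 * y)| := by
        rw [abs_mul, abs_of_pos (Real.exp_pos _)]

lemma poly_eq_zero_of_tendsto_zero (p : Polynomial ℝ)
    (h : Tendsto (fun y => p.eval y) atTop (nhds 0)) : p = 0 := by
  rw [Polynomial.tendsto_nhds_iff] at h
  exact leadingCoeff_eq_zero.mp h.1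

/-- Core: linear independence of polynomial × Gaussian-exponential terms. -/
lemma core {ι : Type*} [DecidableEq ι] (α β : ι → ℝ) (R : ι → Polynomial ℝ)
    (hα : ∀ j, 0 < α j) :
    ∀ s : Finset ι, (Set.InjOn (fun j => (α j, β j)) s) →
      (∀ y : ℝ, ∑ j ∈ s, (R j).eval y * Real.exp (-(α j) * y ^ 2 + β j * y) = 0) →
      ∀ j ∈ s, R j = 0 := by
  intro s
  induction s using Finset.strongInduction with
  | _ s ih =>
    intro hinj hsum j hj
    rcases Finset.eq_empty_or_nonempty s with rfl | hne
    · simp at hj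
    obtain ⟨j₀, hj₀, hmin⟩ := s.exists_min_image (fun j => toLex (α j, -β j)) hne
    have hRj₀ : R j₀ = 0 := by
      apply poly_eq_zero_of_tendsto_zero
      have key : ∀ y : ℝ, (R j₀).eval y =
          ∑ i ∈ s.erase j₀, -((R i).eval y *
            Real.exp (-(α i - α j₀) * y ^ 2 + (β i - β j₀) * y)) := by
        intro y
        have h0 := hsum y
        rw [← Finset.add_sum_erase _ _ hj₀] at h0
        have h1 : (R j₀).eval y * Real.exp (-(α j₀) * y ^ 2 + β j₀ * y)
            = ∑ i ∈ s.erase j₀, -((R i).eval y * Real.exp (-(α i) * y ^ 2 + β i * y)) := by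
          rw [Finset.sum_neg_distrib]; linarith
        have hE : Real.exp (-(α j₀) * y ^ 2 + β j₀ * y) ≠ 0 := Real.exp_ne_zero _
        refine mul_right_cancel₀ hE ?_
        rw [Finset.sum_mul, h1]
        refine Finset.sum_congr rfl fun i _ => ?_
        have h2 : Real.exp (-(α i - α j₀) * y ^ 2 + (β i - β j₀) * y) *
            Real.exp (-(α j₀) * y ^ 2 + β j₀ * y) = Real.exp (-(α i) * y ^ 2 + β i * y) := by
          rw [← Real.exp_add]; ring_nf
        rw [← h2]; ring
      have hconv : Tendsto (fun y : ℝ => ∑ i ∈ s.erase j₀, -((R i).eval y *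
            Real.exp (-(α i - α j₀) * y ^ 2 + (β i - β j₀) * y))) atTop (nhds 0) := by
        have : Tendsto (fun y : ℝ => ∑ i ∈ s.erase j₀, ((R i).eval y *
            Real.exp (-(α i - α j₀) * y ^ 2 + (β i - β j₀) * y))) atTop (nhds 0) := by
          rw [show (0:ℝ) = ∑ i ∈ s.erase j₀, (0:ℝ) by simp]
          apply tendsto_finset_sum
          intro i hi
          have hine : i ≠ j₀ := Finset.ne_of_mem_erase hi
          have his : i ∈ s := Finset.mem_of_mem_erase hi
          have hlex := hmin i his
          rw [Prod.Lex.le_iff] at hlex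
          rcases hlex with hlt | ⟨heq, hle⟩
          · exact poly_mul_exp_quad_tendsto _ _ _ (by simpa using sub_pos.mpr hlt)
          · simp only [ofLex_toLex] at heq hle
            have hβle : β i ≤ β j₀ := neg_le_neg_iff.mp hle
            have hβ : β i < β j₀ := by
              rcases lt_or_eq_of_le hβle with h | h
              · exact h
              · exact absurd (hinj his hj₀ (by
                  simp only [Prod.mk.injEq]; exact ⟨heq.symm, h⟩)) hine
            have hcoef : α i - α j₀ = 0 := sub_eq_zero.mpr heq.symm
            rw [show (fun y : ℝ => (R i).eval y *
                Real.exp (-(α i - α j₀) * y ^ 2 + (β i - β j₀) * y))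
              = fun y : ℝ => (R i).eval y * Real.exp ((β i - β j₀) * y) by
                funext y; rw [hcoef]; ring_nf]
            exact poly_mul_exp_tendsto _ _ (by linarith)
        simpa using this.neg
      exact (funext key : (fun y => (R j₀).eval y) = _) ▸ hconv
    have hsum' : ∀ y : ℝ, ∑ i ∈ s.erase j₀,
        (R i).eval y * Real.exp (-(α i) * y ^ 2 + β i * y) = 0 := by
      intro y
      have h0 := hsum y
      rw [← Finset.add_sum_erase _ _ hj₀, hRj₀] at h0
      simpa using h0
    rcases eq_or_ne j j₀ with rfl | hne'
    · exact hRj₀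
    · exact ih (s.erase j₀) (Finset.erase_ssubset hj₀)
        (hinj.mono (Finset.coe_subset.mpr (Finset.erase_subset _ _)))
        hsum' j (Finset.mem_erase.mpr ⟨hne', hj⟩)

lemma gq_indep (ν : ℝ) (hν : ν ≠ 0) : ∀ (M : ℕ) (c : ℕ → ℝ),
    (∑ ω ∈ Finset.range (M + 1), C (c ω) * gq ν ω) = 0 → ∀ ω ≤ M, c ω = 0 := by
  intro M
  induction M with
  | zero =>
    intro c hc ω hω
    interval_cases ω
    have : C (c 0) = 0 := by simpa [gq] using hc
    exact C_eq_zero.mp this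
  | succ M ih =>
    intro c hc ω hω
    have htop : c (M + 1) = 0 := by
      have h0 : (∑ ω ∈ Finset.range (M + 2), C (c ω) * gq ν ω).coeff (M + 1) = 0 := by
        rw [hc]; simp
      rw [finset_sum_coeff] at h0
      rw [Finset.sum_eq_single (M + 1)] at h0
      · rw [coeff_C_mul, gq_coeff_self] at h0
        exact (mul_eq_zero.mp h0).resolve_right (pow_ne_zero _ (inv_ne_zero hν))
      · intro i hi hine
        rw [coeff_C_mul]
        have : i ≤ M := by
          have := Finset.mem_range.mp hi; omega
        rw [coeff_eq_zero_of_natDegree_lt (lt_of_le_of_lt (gq_natDegree_le ν i) (by omega))]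
        ring
      · intro habs
        exact absurd (Finset.self_mem_range_succ (M + 1)) habs
    rcases Nat.lt_or_ge ω (M + 1) with h | h
    · apply ih c _ ω (by omega)
      rw [Finset.sum_range_succ, htop] at hc
      simpa using hc
    · have : ω = M + 1 := by omega
      rw [this]; exact htop

lemma gauss1_continuous (b ν : ℝ) : Continuous (fun y => gauss1 y b ν) := by
  unfold gauss1
  fun_prop

lemma gauss1_eq (y b ν : ℝ) (hν : 0 < ν) :
    gauss1 y b ν = ((2 * Real.pi * ν) ^ (-(1 : ℝ) / 2) * Real.exp (-(b ^ 2) / (2 * ν))) *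
      Real.exp (-((2 * ν)⁻¹) * y ^ 2 + (b / ν) * y) := by
  unfold gauss1
  have hx : -((y - b) ^ 2) / (2 * ν) =
      -(b ^ 2) / (2 * ν) + (-((2 * ν)⁻¹) * y ^ 2 + (b / ν) * y) := by
    field_simp
    ring
  rw [hx, Real.exp_add]
  ring

open MeasureTheory in
/-- **Linear independence of Gaussian mean-derivatives.** If `(b_j, ν_j)`, `j ∈ [k]`, are
pairwise distinct pairs with `ν_j > 0`, and a finite linear combination
`Σ_j Σ_{ω ≤ N_j} ξ_{j,ω} (∂^ω φ/∂b^ω)(y; b_j, ν_j)` vanishes for Lebesgue-a.e. `y`,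
then all the coefficients `ξ_{j,ω}` vanish. -/
theorem gaussian_derivatives_linear_independent
    (k : ℕ) (hk : 1 ≤ k) (bm : Fin k → ℝ) (ν : Fin k → ℝ) (hν : ∀ j, 0 < ν j)
    (hdist : Function.Injective (fun j => (bm j, ν j)))
    (N : Fin k → ℕ) (ξ : Fin k → ℕ → ℝ)
    (h : ∀ᵐ y : ℝ,
      ∑ j : Fin k, ∑ ω ∈ Finset.range (N j + 1),
        ξ j ω * iteratedDeriv ω (fun b' => gauss1 y b' (ν j)) (bm j) = 0) :
    ∀ j : Fin k, ∀ ω ≤ N j, ξ j ω = 0 := by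
  classical
  set α : Fin k → ℝ := fun j => (2 * ν j)⁻¹ with hα_def
  set β : Fin k → ℝ := fun j => bm j / ν j with hβ_def
  set cf : Fin k → ℝ := fun j =>
    (2 * Real.pi * ν j) ^ (-(1 : ℝ) / 2) * Real.exp (-(bm j ^ 2) / (2 * ν j)) with hcf_def
  have hcf_pos : ∀ j, 0 < cf j := fun j => by
    have h1 : (0:ℝ) < 2 * Real.pi * ν j := by
      have := hν j; have := Real.pi_pos; nlinarith
    exact mul_pos (Real.rpow_pos_of_pos h1 _) (Real.exp_pos _)
  set P : Fin k → Polynomial ℝ := fun j =>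
    C (cf j) * ∑ ω ∈ Finset.range (N j + 1),
      C (ξ j ω) * (gq (ν j) ω).comp (X - C (bm j)) with hP_def
  -- pointwise identity between the two forms
  have hterm : ∀ y : ℝ, ∀ j : Fin k,
      (P j).eval y * Real.exp (-(α j) * y ^ 2 + β j * y)
        = ∑ ω ∈ Finset.range (N j + 1),
            ξ j ω * iteratedDeriv ω (fun b' => gauss1 y b' (ν j)) (bm j) := by
    intro y j
    have hg := gauss1_eq y (bm j) (ν j) (hν j)
    simp only [hP_def, eval_mul, eval_C, eval_finset_sum, eval_comp, eval_sub, eval_X]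
    rw [mul_assoc, Finset.sum_mul, Finset.mul_sum]
    refine Finset.sum_congr rfl fun ω _ => ?_
    rw [iteratedDeriv_gauss1 y (ν j) (ne_of_gt (hν j)) ω (bm j), hg]
    simp only [hα_def, hβ_def]
    ring
  -- from a.e. to everywhere, using continuity
  have hS : ∀ y : ℝ, ∑ j : Fin k, (P j).eval y * Real.exp (-(α j) * y ^ 2 + β j * y) = 0 := by
    have hcont : Continuous (fun y : ℝ =>
        ∑ j : Fin k, (P j).eval y * Real.exp (-(α j) * y ^ 2 + β j * y)) := by
      fun_prop
    have hae : (fun y : ℝ =>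
        ∑ j : Fin k, (P j).eval y * Real.exp (-(α j) * y ^ 2 + β j * y))
        =ᵐ[volume] (fun _ : ℝ => (0:ℝ)) := by
      filter_upwards [h] with y hy
      rw [← hy]
      exact Finset.sum_congr rfl fun j _ => hterm y j
    have := (hcont.ae_eq_iff_eq volume continuous_const).mp hae
    intro y
    exact congrFun this y
  -- injectivity of (α, β)
  have hinj : Set.InjOn (fun j => (α j, β j)) (Finset.univ : Finset (Fin k)) := by
    intro i _ j _ hij
    simp only [Prod.mk.injEq, hα_def, hβ_def] at hij
    have hνeq : ν i = ν j := by
      have := hij.1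
      have h2 : (2 : ℝ) * ν i = 2 * ν j := by
        have := congrArg (fun x : ℝ => x⁻¹) this
        simpa [inv_inv] using this
      linarith
    have hbeq : bm i = bm j := by
      have := hij.2
      rw [hνeq] at this
      have h3 := (div_eq_div_iff (ne_of_gt (hν j)) (ne_of_gt (hν j))).mp this
      exact mul_right_cancel₀ (ne_of_gt (hν j)) h3
    exact hdist (by simp [hbeq, hνeq])
  have hαpos : ∀ j, 0 < α j := fun j => by
    have := hν j
    simp only [hα_def]
    exact inv_pos.mpr (by linarith)
  have hP0 : ∀ j : Fin k, P j = 0 := by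
    intro j
    exact core α β P hαpos Finset.univ hinj (fun y => hS y) j (Finset.mem_univ j)
  intro j ω hω
  have hQ : (∑ ω ∈ Finset.range (N j + 1), C (ξ j ω) * gq (ν j) ω) = 0 := by
    apply Polynomial.funext
    intro u
    have := hP0 j
    have heval : (P j).eval (u + bm j) = 0 := by rw [this]; simp
    simp only [hP_def, eval_mul, eval_C, eval_finset_sum, eval_comp, eval_sub, eval_X,
      add_sub_cancel_right] at heval
    rcases mul_eq_zero.mp heval with h1 | h2
    · exact absurd h1 (ne_of_gt (hcf_pos j))
    · simpa [eval_finset_sum] using h2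
  exact gq_indep (ν j) (ne_of_gt (hν j)) (N j) (ξ j) hQ ω hω
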